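/- Let m ≥ 0 and let C > 0. For each n let F_n = (F_{n,0}, …, F_{n,m}) be a tuple of holomorphic functions on an open neighbourhood of the closed unit disc in ℂ, without common zeros, whose Nevanlinna characteristic satisfies T_{F_n}(1) ≤ C for all n, where T_F(r) := (1/2π) ∫₀^{2π} (1/2)·log( ∑_j |F_j(r·e^{iθ})|² ) dθ − (1/2)·log( ∑_j |F_j(0)|² ). Then there exist a strictly increasing sequence of indices n_k, nowhere-vanishing holomorphic functions λ_k on the open unit disc Δ, and holomorphic functions g_0, …, g_m on Δ, not all identically zero, such that for each j the functions λ_k·F_{n_k,j} converge to g_j uniformly on compact subsets of Δ. -/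

import Mathlib

open Complex Real Filter Metric Topology


noncomputable def trm (k : ℤ) (a : ℂ) (z : ℂ) : ℂ :=
  if 0 ≤ k then a * z ^ k.toNat else (starRingEnd ℂ) a * z ^ (-k).toNat

lemma trm_differentiable (k : ℤ) (a : ℂ) : Differentiable ℂ (trm k a) := by
  unfold trm
  split_ifs <;> exact (differentiable_pow _).const_mul _

lemma exp_pow_eq (nn : ℕ) (θ : ℝ) :
    Complex.exp (θ * Complex.I) ^ nn = Complex.exp (((nn : ℝ) * θ : ℝ) * Complex.I) := by
  rw [← Complex.exp_nat_mul]
  push_cast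
  ring_nf

lemma fourier_eval (k : ℤ) (θ : ℝ) :
    fourier (T := 2 * Real.pi) k (θ : AddCircle (2 * Real.pi)) =
      Complex.exp (((k : ℝ) * θ : ℝ) * Complex.I) := by
  rw [fourier_coe_apply]
  congr 1
  push_cast
  rw [div_eq_iff (by simp [Real.pi_ne_zero] : (2*(π:ℂ)) ≠ 0)]
  ring

lemma toNat_cast_real_of_nonneg {k : ℤ} (h : 0 ≤ k) : ((k.toNat : ℝ)) = (k : ℝ) := by
  exact_mod_cast congrArg (Int.cast : ℤ → ℝ) (Int.toNat_of_nonneg h)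

lemma trm_re_eq (k : ℤ) (a : ℂ) (θ : ℝ) :
    (trm k a (Complex.exp (θ * Complex.I))).re
      = (a • fourier (T := 2 * Real.pi) k (θ : AddCircle (2 * Real.pi))).re := by
  rw [fourier_eval]
  unfold trm
  split_ifs with h
  · rw [exp_pow_eq, toNat_cast_real_of_nonneg h]
    simp [Complex.smul_re, mul_comm]
  · push_neg at h
    have : ((starRingEnd ℂ) a * Complex.exp (θ * Complex.I) ^ (-k).toNat)
        = (starRingEnd ℂ) (a * Complex.exp (((k:ℝ) * θ : ℝ) * Complex.I)) := by
      rw [map_mul, exp_pow_eq, toNat_cast_real_of_nonneg (by omega)]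
      congr 1
      rw [← Complex.exp_conj]
      congr 1
      simp only [map_mul, Complex.conj_I, Complex.conj_ofReal]
      push_cast
      ring
    rw [this, Complex.conj_re]
    simp [Complex.smul_re]

lemma trm_circle (k : ℤ) (a : ℂ) (θ : ℝ) :
    trm k a (Complex.exp (θ * Complex.I))
      = (if 0 ≤ k then a else (starRingEnd ℂ) a)
          * Complex.exp ((((if 0 ≤ k then k.toNat else (-k).toNat : ℕ)) * Complex.I) * θ) := by
  unfold trm
  split_ifs with h <;>
  · rw [exp_pow_eq]
    congr 1
    push_cast
    ring

lemma exp_nat_two_pi (n : ℕ) : Complex.exp ((n : ℂ) * Complex.I * (2 * π)) = 1 := by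
  have := Complex.exp_int_mul_two_pi_mul_I (n : ℤ)
  rw [← this]
  congr 1
  push_cast
  ring

lemma trm_integral (k : ℤ) (a : ℂ) :
    ∫ θ in (0:ℝ)..(2*π), (trm k a (Complex.exp (θ * Complex.I))).re
      = 2 * π * (trm k a 0).re := by
  set a' : ℂ := if 0 ≤ k then a else (starRingEnd ℂ) a with ha'
  set k' : ℕ := if 0 ≤ k then k.toNat else (-k).toNat with hk'
  have hcirc : ∀ θ : ℝ, trm k a (Complex.exp (θ * Complex.I))
      = a' * Complex.exp (((k' : ℂ) * Complex.I) * θ) := fun θ => trm_circle k a θ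
  have hcont : Continuous fun θ : ℝ => a' * Complex.exp (((k' : ℂ) * Complex.I) * θ) := by
    fun_prop
  rw [intervalIntegral.integral_congr (g := fun θ : ℝ =>
      (a' * Complex.exp (((k' : ℂ) * Complex.I) * θ)).re) (fun θ _ => by rw [hcirc θ])]
  have hswap : ∫ θ in (0:ℝ)..(2*π), (a' * Complex.exp (((k' : ℂ) * Complex.I) * θ)).re
      = (∫ θ in (0:ℝ)..(2*π), a' * Complex.exp (((k' : ℂ) * Complex.I) * θ)).re := by
    exact (Complex.reCLM.intervalIntegral_comp_comm
      (hcont.intervalIntegrable (μ := MeasureTheory.volume) 0 (2*π)))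
  rw [hswap]
  by_cases hk0 : k = 0
  · subst hk0
    simp only [hk', ha']
    norm_num
    simp [trm]
  · have hk'0 : k' ≠ 0 := by
      simp only [hk']
      split_ifs with h
      · omega
      · omega
    have hc : ((k' : ℂ) * Complex.I) ≠ 0 := by
      simp [Complex.I_ne_zero, Nat.cast_ne_zero, hk'0]
    have : ∫ θ in (0:ℝ)..(2*π), a' * Complex.exp (((k' : ℂ) * Complex.I) * θ)
        = a' * ∫ θ in (0:ℝ)..(2*π), Complex.exp (((k' : ℂ) * Complex.I) * θ) := by
      exact intervalIntegral.integral_const_mul _ _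
    rw [this, integral_exp_mul_complex hc]
    have he : Complex.exp ((k' : ℂ) * Complex.I * ((2:ℝ)*π : ℝ)) = 1 := by
      rw [show ((k' : ℂ) * Complex.I * ((2:ℝ)*π : ℝ)) = (k' : ℂ) * Complex.I * (2*π) by push_cast; ring]
      exact exp_nat_two_pi k'
    rw [he]
    norm_num
    have : trm k a 0 = 0 := by
      unfold trm
      split_ifs with h <;>
      · rw [zero_pow (by omega), mul_zero]
    simp [this]

lemma exists_entire_approx (V : C(AddCircle (2 * Real.pi), ℂ)) :
    ∃ p : ℂ → ℂ, Differentiable ℂ p ∧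
      (∀ θ : ℝ, |(p (Complex.exp (θ * Complex.I))).re - (V θ).re| ≤ 1) ∧
      (p 0).re = (2 * Real.pi)⁻¹ *
        ∫ θ in (0:ℝ)..(2 * Real.pi), (p (Complex.exp (θ * Complex.I))).re := by
  haveI : Fact (0 < 2 * Real.pi) := ⟨by positivity⟩
  have hdense := span_fourier_closure_eq_top (T := 2 * Real.pi)
  have hVmem : (V : C(AddCircle (2 * Real.pi), ℂ)) ∈
      closure ((Submodule.span ℂ (Set.range (@fourier (2 * Real.pi)))) : Set _) := by
    rw [← Submodule.topologicalClosure_coe, hdense]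
    trivial
  obtain ⟨w, hwmem, hdist⟩ := Metric.mem_closure_iff.mp hVmem 1 one_pos
  obtain ⟨c, hc⟩ := Finsupp.mem_span_range_iff_exists_finsupp.mp hwmem
  refine ⟨fun z => ∑ k ∈ c.support, trm k (c k) z, ?_, ?_, ?_⟩
  · exact Differentiable.fun_sum fun k _ => trm_differentiable k (c k)
  · intro θ
    have h1 : (∑ k ∈ c.support, trm k (c k) (Complex.exp (θ * Complex.I))).re
        = (w (θ : AddCircle (2 * Real.pi))).re := by
      rw [Complex.re_sum]
      rw [← hc]
      have : ((c.sum fun i a => a • fourier (T := 2 * Real.pi) i) (θ : AddCircle (2 * Real.pi)))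
          = ∑ k ∈ c.support, (c k • fourier (T := 2 * Real.pi) k (θ : AddCircle (2 * Real.pi)) : ℂ) := by
        rw [Finsupp.sum]
        rw [ContinuousMap.sum_apply]
        rfl
      rw [this, Complex.re_sum]
      exact Finset.sum_congr rfl fun k _ => trm_re_eq k (c k) θ
    rw [h1]
    have h2 : |(w (θ : AddCircle (2 * Real.pi))).re - (V θ).re|
        ≤ ‖w (θ : AddCircle (2 * Real.pi)) - V θ‖ := by
      rw [← Complex.sub_re]
      exact Complex.abs_re_le_norm _
    have h3 : ‖w (θ : AddCircle (2 * Real.pi)) - V θ‖ ≤ dist V w := by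
      rw [← Complex.dist_eq, dist_comm]
      exact ContinuousMap.dist_apply_le_dist _
    linarith
  · have hint : ∫ θ in (0:ℝ)..(2*π),
        (∑ k ∈ c.support, trm k (c k) (Complex.exp (θ * Complex.I))).re
        = 2 * π * (∑ k ∈ c.support, trm k (c k) 0).re := by
      have : ∀ θ : ℝ, (∑ k ∈ c.support, trm k (c k) (Complex.exp (θ * Complex.I))).re
          = ∑ k ∈ c.support, (trm k (c k) (Complex.exp (θ * Complex.I))).re := fun θ =>
        Complex.re_sum _ _
      rw [intervalIntegral.integral_congr (fun θ _ => this θ)]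
      rw [intervalIntegral.integral_finset_sum]
      · rw [Complex.re_sum, Finset.mul_sum]
        exact Finset.sum_congr rfl fun k _ => trm_integral k (c k)
      · intro k _
        have hcont : Continuous fun θ : ℝ => (trm k (c k) (Complex.exp (θ * Complex.I))).re := by
          apply Complex.continuous_re.comp
          exact (trm_differentiable k (c k)).continuous.comp (by fun_prop)
        exact hcont.intervalIntegrable _ _
    rw [hint]
    field_simp

lemma key_bound (m : ℕ) (C : ℝ) (Fn : Fin (m+1) → ℂ → ℂ) (Un : Set ℂ)
    (hUopen : IsOpen Un) (hUsub : closedBall (0:ℂ) 1 ⊆ Un)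
    (hF : ∀ j, DifferentiableOn ℂ (Fn j) Un)
    (hnc : ∀ z ∈ closedBall (0:ℂ) 1, ∃ j, Fn j z ≠ 0)
    (hT : (2 * Real.pi)⁻¹ *
            (∫ θ in (0:ℝ)..(2 * Real.pi),
              (1 / 2) * Real.log (∑ j, ‖Fn j (Complex.exp (θ * Complex.I))‖ ^ 2)) -
          (1 / 2) * Real.log (∑ j, ‖Fn j 0‖ ^ 2) ≤ C) :
    ∃ q : ℂ → ℂ, Differentiable ℂ q ∧
      (∀ j, ∀ z ∈ closedBall (0:ℂ) 1, ‖Complex.exp (-q z) * Fn j z‖ ≤ 1) ∧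
      Real.exp (-2*C - 6) ≤ ∑ j, ‖Complex.exp (-q 0) * Fn j 0‖ ^ 2 := by
  -- continuity and positivity of the sum of squares
  have hSpos : ∀ z ∈ closedBall (0:ℂ) 1, 0 < ∑ j, ‖Fn j z‖ ^ 2 := by
    intro z hz
    obtain ⟨j0, hj0⟩ := hnc z hz
    refine Finset.sum_pos' (fun j _ => by positivity) ⟨j0, Finset.mem_univ _, ?_⟩
    have : 0 < ‖Fn j0 z‖ := norm_pos_iff.mpr hj0
    positivity
  have hFat : ∀ (j) (z), z ∈ closedBall (0:ℂ) 1 → ContinuousAt (Fn j) z := fun j z hz =>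
    ((hF j).differentiableAt (hUopen.mem_nhds (hUsub hz))).continuousAt
  have hScont : ∀ z ∈ closedBall (0:ℂ) 1,
      ContinuousAt (fun w => ∑ j, ‖Fn j w‖ ^ 2) z := by
    intro z hz
    exact tendsto_finset_sum _ fun j _ =>
      ((continuous_norm.continuousAt.comp (hFat j z hz)).pow 2)
  have hLcont : ∀ z ∈ closedBall (0:ℂ) 1,
      ContinuousAt (fun w => (1/2) * Real.log (∑ j, ‖Fn j w‖ ^ 2)) z := by
    intro z hz
    exact continuousAt_const.mul ((hScont z hz).log (hSpos z hz).ne')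
  -- the boundary function on the circle
  have hmemC : ∀ ww : Circle, (ww : ℂ) ∈ closedBall (0:ℂ) 1 := by
    intro ww
    simp [Complex.dist_eq, Circle.norm_coe]
  set realV : ℂ → ℝ := fun w => (1/2) * Real.log (∑ j, ‖Fn j w‖ ^ 2) with hrealV
  have hVccont : Continuous fun ww : Circle => ((realV (ww : ℂ) : ℝ) : ℂ) := by
    apply Complex.continuous_ofReal.comp
    apply ContinuousOn.comp_continuous (s := closedBall (0:ℂ) 1)
      (fun z hz => (hLcont z hz).continuousWithinAt) continuous_subtype_val hmemC
  set Vc : C(Circle, ℂ) := ⟨_, hVccont⟩ with hVc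
  set V : C(AddCircle (2 * Real.pi), ℂ) :=
    Vc.comp (AddCircle.homeomorphCircle' : C(AddCircle (2 * Real.pi), Circle)) with hV
  have hVθ : ∀ θ : ℝ, V (θ : AddCircle (2 * Real.pi)) =
      ((realV (Complex.exp (θ * Complex.I)) : ℝ) : ℂ) := by
    intro θ
    have h1 : ((AddCircle.homeomorphCircle' (θ : AddCircle (2 * Real.pi)) : Circle) : ℂ)
        = Complex.exp (θ * Complex.I) := by
      rw [AddCircle.homeomorphCircle'_apply_mk, Circle.coe_exp]
    simp only [hV, ContinuousMap.comp_apply, ContinuousMap.coe_coe, hVc,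
      ContinuousMap.coe_mk]
    rw [h1]
  obtain ⟨p, hpdiff, hpclose, hpmean⟩ := exists_entire_approx V
  set u : ℝ → ℝ := fun θ => realV (Complex.exp (θ * Complex.I)) with hu
  have hclose : ∀ θ : ℝ, |(p (Complex.exp (θ * Complex.I))).re - u θ| ≤ 1 := by
    intro θ
    have h := hpclose θ
    rw [hVθ θ] at h
    simpa using h
  set q : ℂ → ℂ := fun z => p z + 2 with hq
  have hqdiff : Differentiable ℂ q := hpdiff.add_const 2
  have hmemθ : ∀ θ : ℝ, Complex.exp (θ * Complex.I) ∈ closedBall (0:ℂ) 1 := by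
    intro θ
    simp [Complex.dist_eq, Complex.norm_exp_ofReal_mul_I]
  -- boundary estimate
  have hbdry : ∀ (j) (w), w ∈ sphere (0:ℂ) 1 → ‖Complex.exp (-q w) * Fn j w‖ ≤ 1 := by
    intro j w hw
    have habsw : ‖w‖ = 1 := by simpa [Complex.dist_eq] using hw
    have hwexp : w = Complex.exp ((Complex.arg w) * Complex.I) := by
      conv_lhs => rw [← Complex.norm_mul_exp_arg_mul_I w]
      rw [habsw]
      simp
    set θ := Complex.arg w
    have hsq : ‖Fn j w‖ ^ 2 ≤ Real.exp (u θ) ^ 2 := by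
      have h1 : Real.exp (u θ) ^ 2 = ∑ j', ‖Fn j' w‖ ^ 2 := by
        rw [← Real.exp_nat_mul]
        have h2 : ((2:ℕ):ℝ) * u θ
            = Real.log (∑ j', ‖Fn j' (Complex.exp (θ * Complex.I))‖ ^ 2) := by
          rw [hu, hrealV]; push_cast; ring
        rw [h2, Real.exp_log (hSpos _ (hmemθ θ)), ← hwexp]
      rw [h1]
      exact Finset.single_le_sum (f := fun j' => ‖Fn j' w‖ ^ 2)
        (fun j' _ => by positivity) (Finset.mem_univ j)
    have habsF : ‖Fn j w‖ ≤ Real.exp (u θ) :=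
      (abs_le_of_sq_le_sq' hsq (Real.exp_nonneg _)).2
    have hqre : u θ + 1 ≤ (q w).re := by
      have h2 := hclose θ
      have : (q w).re = (p (Complex.exp (θ * Complex.I))).re + 2 := by
        rw [hq]
        simp only [Complex.add_re]
        rw [← hwexp]
        norm_num
      rw [this]
      rw [abs_le] at h2
      linarith [h2.1]
    calc ‖Complex.exp (-q w) * Fn j w‖
        = Real.exp (-(q w).re) * ‖Fn j w‖ := by
          rw [norm_mul, Complex.norm_exp]
          simp
      _ ≤ Real.exp (-(q w).re) * Real.exp (u θ) := by
          exact mul_le_mul_of_nonneg_left habsF (Real.exp_nonneg _)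
      _ = Real.exp (u θ - (q w).re) := by rw [← Real.exp_add]; ring_nf
      _ ≤ Real.exp (-1) := Real.exp_le_exp.mpr (by linarith)
      _ ≤ 1 := Real.exp_le_one_iff.mpr (by norm_num)
  -- maximum principle
  have hmax : ∀ (j) (z), z ∈ closedBall (0:ℂ) 1 → ‖Complex.exp (-q z) * Fn j z‖ ≤ 1 := by
    intro j z hz
    have hdc : DiffContOnCl ℂ (fun z => Complex.exp (-q z) * Fn j z) (ball (0:ℂ) 1) := by
      constructor
      · exact ((hqdiff.neg.cexp).differentiableOn).mul
          ((hF j).mono (ball_subset_closedBall.trans hUsub))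
      · rw [closure_ball (0:ℂ) one_ne_zero]
        exact ((hqdiff.neg.cexp).continuous.continuousOn).mul
          (((hF j).continuousOn).mono hUsub)
    have := Complex.norm_le_of_forall_mem_frontier_norm_le isBounded_ball hdc
      (fun w hw => hbdry j w (by rwa [frontier_ball (0:ℂ) one_ne_zero] at hw))
      (z := z) (by rwa [closure_ball (0:ℂ) one_ne_zero])
    exact this
  -- lower bound at 0
  have hucont : Continuous u := by
    rw [continuous_iff_continuousAt]
    intro θ
    have hg : ContinuousAt (fun θ : ℝ => Complex.exp (θ * Complex.I)) θ := by fun_prop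
    show ContinuousAt (realV ∘ fun θ : ℝ => Complex.exp (θ * Complex.I)) θ
    exact ContinuousAt.comp (hLcont _ (hmemθ θ)) hg
  have hpcont : Continuous fun θ : ℝ => (p (Complex.exp (θ * Complex.I))).re := by
    apply Complex.continuous_re.comp
    exact hpdiff.continuous.comp (by fun_prop)
  have hmono : ∫ θ in (0:ℝ)..(2*Real.pi), (p (Complex.exp (θ * Complex.I))).re
      ≤ ∫ θ in (0:ℝ)..(2*Real.pi), (u θ + 1) := by
    apply intervalIntegral.integral_mono_on (by positivity)
      (hpcont.intervalIntegrable _ _) ((hucont.add continuous_const).intervalIntegrable _ _)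
    intro θ _
    have := hclose θ
    rw [abs_le] at this
    simp only [Pi.add_apply]
    linarith [this.2]
  have hintu : ∫ θ in (0:ℝ)..(2*Real.pi), (u θ + 1) =
      (∫ θ in (0:ℝ)..(2*Real.pi), u θ) + 2*Real.pi := by
    rw [intervalIntegral.integral_add (hucont.intervalIntegrable _ _)
      (intervalIntegrable_const)]
    simp
  have hq0 : (q 0).re ≤ C + (1/2) * Real.log (∑ j, ‖Fn j 0‖ ^ 2) + 3 := by
    have h0 : (q 0).re = (p 0).re + 2 := by simp [hq]
    rw [h0, hpmean]
    have h1 : (2*Real.pi)⁻¹ * ∫ θ in (0:ℝ)..(2*Real.pi), (p (Complex.exp (θ * Complex.I))).re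
        ≤ (2*Real.pi)⁻¹ * ((∫ θ in (0:ℝ)..(2*Real.pi), u θ) + 2*Real.pi) := by
      rw [← hintu]
      exact mul_le_mul_of_nonneg_left (hmono) (by positivity)
    have h2 : (2*Real.pi)⁻¹ * ((∫ θ in (0:ℝ)..(2*Real.pi), u θ) + 2*Real.pi)
        = (2*Real.pi)⁻¹ * (∫ θ in (0:ℝ)..(2*Real.pi), u θ) + 1 := by
      field_simp
    have h3 : (2*Real.pi)⁻¹ * (∫ θ in (0:ℝ)..(2*Real.pi), u θ)
        ≤ C + (1/2) * Real.log (∑ j, ‖Fn j 0‖ ^ 2) := by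
      have hsame : (∫ θ in (0:ℝ)..(2*Real.pi), u θ)
          = ∫ θ in (0:ℝ)..(2 * Real.pi),
              (1 / 2) * Real.log (∑ j, ‖Fn j (Complex.exp (θ * Complex.I))‖ ^ 2) := by
        rw [hu, hrealV]
      rw [hsame]
      linarith [hT]
    linarith
  refine ⟨q, hqdiff, hmax, ?_⟩
  have hsum0 : ∑ j, ‖Complex.exp (-q 0) * Fn j 0‖ ^ 2
      = Real.exp (-(q 0).re) ^ 2 * ∑ j, ‖Fn j 0‖ ^ 2 := by
    rw [Finset.mul_sum]
    apply Finset.sum_congr rfl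
    intro j _
    rw [norm_mul, mul_pow, Complex.norm_exp]
    simp
  rw [hsum0]
  have hS0 := hSpos 0 (by simp)
  have : Real.exp (-(q 0).re) ^ 2 * ∑ j, ‖Fn j 0‖ ^ 2
      = Real.exp (-2 * (q 0).re + Real.log (∑ j, ‖Fn j 0‖ ^ 2)) := by
    rw [← Real.exp_nat_mul, Real.exp_add, Real.exp_log hS0]
    norm_num
  rw [this]
  apply Real.exp_le_exp.mpr
  have := hq0
  nlinarith [hq0]

lemma tail_est {c : ℕ → ℂ} {S : ℂ} {r : ℝ} (hr0 : 0 ≤ r) (hr : r < 1)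
    (hc : ∀ i, ‖c i‖ ≤ 1) {z : ℂ} (hz : ‖z‖ ≤ r)
    (hS : HasSum (fun i => z ^ i * c i) S) (N : ℕ) :
    ‖S - ∑ i ∈ Finset.range N, z ^ i * c i‖ ≤ r ^ N / (1 - r) := by
  have hsummable := hS.summable
  have hkey := Summable.sum_add_tsum_nat_add N hsummable
  have hdiff : S - ∑ i ∈ Finset.range N, z ^ i * c i = ∑' i, z ^ (i + N) * c (i + N) := by
    rw [hS.tsum_eq] at hkey
    linear_combination -hkey
  rw [hdiff]
  have hnorm : ∀ i, ‖z ^ (i + N) * c (i + N)‖ ≤ r ^ (i + N) := by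
    intro i
    rw [norm_mul, norm_pow]
    calc ‖z‖ ^ (i + N) * ‖c (i + N)‖ ≤ r ^ (i + N) * 1 := by
          exact mul_le_mul (pow_le_pow_left₀ (norm_nonneg _) hz _) (hc _)
            (norm_nonneg _) (by positivity)
      _ = r ^ (i + N) := mul_one _
  have hgeo : Summable fun i : ℕ => r ^ (i + N) := by
    have := (summable_geometric_of_lt_one hr0 hr).mul_left (r ^ N)
    apply this.congr
    intro i
    rw [← pow_add]
    ring_nf
  have hnormsum : Summable fun i => ‖z ^ (i + N) * c (i + N)‖ :=
    Summable.of_nonneg_of_le (fun i => norm_nonneg _) hnorm hgeo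
  calc ‖∑' i, z ^ (i + N) * c (i + N)‖ ≤ ∑' i, ‖z ^ (i + N) * c (i + N)‖ :=
        norm_tsum_le_tsum_norm hnormsum
    _ ≤ ∑' i, r ^ (i + N) := Summable.tsum_le_tsum hnorm hnormsum hgeo
    _ = r ^ N / (1 - r) := by
        have h1 : ∀ i : ℕ, r ^ (i + N) = r ^ N * r ^ i := by
          intro i; rw [← pow_add]; ring_nf
        rw [tsum_congr h1, tsum_mul_left, tsum_geometric_of_lt_one hr0 hr]
        rw [div_eq_mul_inv]

lemma montel_bounded (m : ℕ) (Ψ : ℕ → Fin (m+1) → ℂ → ℂ)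
    (hdiff : ∀ n j, DifferentiableOn ℂ (Ψ n j) (closedBall (0:ℂ) 1))
    (hbd : ∀ n j, ∀ z ∈ closedBall (0:ℂ) 1, ‖Ψ n j z‖ ≤ 1) :
    ∃ nk : ℕ → ℕ, StrictMono nk ∧ ∃ g : Fin (m+1) → ℂ → ℂ,
      ∀ j, ∀ K : Set ℂ, K ⊆ ball (0:ℂ) 1 → IsCompact K →
        TendstoUniformlyOn (fun k z => Ψ (nk k) j z) (g j) atTop K := by
  set a : ℕ → ℕ → Fin (m+1) → ℂ :=
    fun n i j => (cauchyPowerSeries (Ψ n j) 0 1).coeff i with ha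
  -- coefficient bounds
  have ha_bd : ∀ n i j, ‖a n i j‖ ≤ 1 := by
    intro n i j
    have h1 : ‖a n i j‖ = ‖cauchyPowerSeries (Ψ n j) 0 1 i‖ :=
      (FormalMultilinearSeries.norm_apply_eq_norm_coef
        (p := cauchyPowerSeries (Ψ n j) 0 1) (n := i)).symm
    rw [h1]
    have h2 := norm_cauchyPowerSeries_le (Ψ n j) 0 1 i
    have hint : ∫ θ in (0:ℝ)..(2*π), ‖Ψ n j (circleMap 0 1 θ)‖ ≤ 2 * π := by
      have hcont : Continuous fun θ : ℝ => ‖Ψ n j (circleMap 0 1 θ)‖ := by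
        apply continuous_norm.comp
        apply ContinuousOn.comp_continuous (s := closedBall (0:ℂ) 1)
          (hdiff n j).continuousOn (continuous_circleMap 0 1)
        intro θ
        exact sphere_subset_closedBall (circleMap_mem_sphere (0:ℂ) zero_le_one θ)
      calc ∫ θ in (0:ℝ)..(2*π), ‖Ψ n j (circleMap 0 1 θ)‖
          ≤ ∫ _ in (0:ℝ)..(2*π), (1:ℝ) := by
            apply intervalIntegral.integral_mono_on (by positivity)
              (hcont.intervalIntegrable _ _) intervalIntegrable_const
            intro θ _
            exact hbd n j _ (sphere_subset_closedBall (circleMap_mem_sphere (0:ℂ) zero_le_one θ))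
        _ = 2 * π := by simp
    calc ‖cauchyPowerSeries (Ψ n j) 0 1 i‖
        ≤ ((2*π)⁻¹ * ∫ θ in (0:ℝ)..(2*π), ‖Ψ n j (circleMap 0 1 θ)‖) * |(1:ℝ)|⁻¹ ^ i := h2
      _ ≤ ((2*π)⁻¹ * (2*π)) * |(1:ℝ)|⁻¹ ^ i := by
          apply mul_le_mul_of_nonneg_right _ (by positivity)
          exact mul_le_mul_of_nonneg_left hint (by positivity)
      _ = 1 := by
          rw [inv_mul_cancel₀ (by positivity)]
          simp
  -- power series expansion
  have hsum : ∀ n j (z : ℂ), ‖z‖ < 1 → HasSum (fun i => z ^ i * a n i j) (Ψ n j z) := by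
    intro n j z hz
    have hd1 : DifferentiableOn ℂ (Ψ n j) (closedBall (0:ℂ) ((1:NNReal) : ℝ)) := by
      simpa using hdiff n j
    have hps := hd1.hasFPowerSeriesOnBall (R := 1) one_pos
    have hmem : z ∈ Metric.eball (0:ℂ) ((1:NNReal) : ENNReal) := by
      rw [Metric.mem_eball, edist_zero_right]
      exact_mod_cast (by exact_mod_cast hz : ‖z‖₊ < (1:NNReal))
    have hhs := hps.hasSum hmem
    rw [zero_add] at hhs
    have heq : (fun i => (cauchyPowerSeries (Ψ n j) 0 1) i fun _ => z)
        = fun i => z ^ i * a n i j := by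
      funext i
      rw [FormalMultilinearSeries.apply_eq_pow_smul_coeff, smul_eq_mul]
    exact (heq ▸ hhs)
  -- sequential compactness of coefficients
  set S : Set (ℕ → Fin (m+1) → ℂ) :=
    Set.pi Set.univ fun _ : ℕ => Set.pi Set.univ fun _ : Fin (m+1) => closedBall (0:ℂ) 1
    with hSdef
  have hScomp : IsCompact S :=
    isCompact_univ_pi fun _ => isCompact_univ_pi fun _ => isCompact_closedBall _ _
  have hmemS : ∀ n, (a n) ∈ S := by
    intro n
    rw [hSdef]
    exact Set.mem_univ_pi.mpr fun i => Set.mem_univ_pi.mpr fun j =>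
      mem_closedBall_zero_iff.mpr (ha_bd n i j)
  obtain ⟨b, hbS, nk, hnk, hconv⟩ := hScomp.isSeqCompact hmemS
  have hb_bd : ∀ i j, ‖b i j‖ ≤ 1 := by
    intro i j
    have h1 := (Set.mem_univ_pi.mp hbS) i
    have h2 := (Set.mem_univ_pi.mp h1) j
    rwa [mem_closedBall_zero_iff] at h2
  have hcoord : ∀ i j, Tendsto (fun k => a (nk k) i j) atTop (𝓝 (b i j)) := by
    intro i j
    have h1 := tendsto_pi_nhds.mp hconv i
    exact tendsto_pi_nhds.mp h1 j
  -- limit functions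
  set g : Fin (m+1) → ℂ → ℂ := fun j z => ∑' i, z ^ i * b i j with hg
  have hgsum : ∀ j (z : ℂ), ‖z‖ < 1 → HasSum (fun i => z ^ i * b i j) (g j z) := by
    intro j z hz
    apply Summable.hasSum
    apply Summable.of_norm_bounded (summable_geometric_of_lt_one (norm_nonneg z) hz)
    intro i
    rw [norm_mul, norm_pow]
    calc ‖z‖ ^ i * ‖b i j‖ ≤ ‖z‖ ^ i * 1 :=
          mul_le_mul_of_nonneg_left (hb_bd i j) (by positivity)
      _ = ‖z‖ ^ i := mul_one _
  refine ⟨nk, hnk, g, ?_⟩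
  intro j K hK hKc
  rw [Metric.tendstoUniformlyOn_iff]
  intro ε hε
  rcases K.eq_empty_or_nonempty with hKe | hKne
  · filter_upwards with k z hz
    rw [hKe] at hz
    exact absurd hz (Set.notMem_empty z)
  obtain ⟨z₀, hz₀K, hz₀m⟩ := hKc.exists_isMaxOn hKne continuous_norm.continuousOn
  have hz₀max : ∀ z ∈ K, ‖z‖ ≤ ‖z₀‖ := fun z hz => hz₀m hz
  set r : ℝ := ‖z₀‖ with hr
  have hr0 : 0 ≤ r := norm_nonneg _
  have hr1 : r < 1 := by
    have := hK hz₀K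
    rwa [mem_ball_zero_iff] at this
  have hzr : ∀ z ∈ K, ‖z‖ ≤ r := hz₀max
  -- choose N
  have htend : Tendsto (fun N : ℕ => r ^ N / (1 - r)) atTop (𝓝 0) := by
    rw [show (0:ℝ) = 0 / (1 - r) by simp]
    exact (tendsto_pow_atTop_nhds_zero_of_lt_one hr0 hr1).div_const _
  obtain ⟨N, hN⟩ := (htend.eventually (eventually_lt_nhds (show (0:ℝ) < ε/4 by positivity))).exists
  -- eventual coefficient closeness
  have hev : ∀ᶠ k in atTop, ∀ i ∈ Finset.range N, ‖a (nk k) i j - b i j‖ < ε/(4*(N+1)) := by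
    rw [Finset.eventually_all]
    intro i _
    obtain ⟨K₀, hK₀⟩ := Metric.tendsto_atTop.mp (hcoord i j) (ε/(4*(N+1))) (by positivity)
    filter_upwards [eventually_ge_atTop K₀] with k hk
    have hd := hK₀ k hk
    rwa [dist_eq_norm] at hd
  filter_upwards [hev] with k hkev z hzK
  have hzb : ‖z‖ < 1 := lt_of_le_of_lt (hzr z hzK) hr1
  have hsum1 := hsum (nk k) j z hzb
  have hsum2 := hgsum j z hzb
  have htail1 : ‖Ψ (nk k) j z - ∑ i ∈ Finset.range N, z ^ i * a (nk k) i j‖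
      ≤ r ^ N / (1 - r) :=
    tail_est hr0 hr1 (fun i => ha_bd (nk k) i j) (hzr z hzK) hsum1 N
  have htail2 : ‖g j z - ∑ i ∈ Finset.range N, z ^ i * b i j‖ ≤ r ^ N / (1 - r) :=
    tail_est hr0 hr1 (fun i => hb_bd i j) (hzr z hzK) hsum2 N
  have hmid : ‖(∑ i ∈ Finset.range N, z ^ i * a (nk k) i j)
      - ∑ i ∈ Finset.range N, z ^ i * b i j‖ ≤ ε/4 := by
    rw [← Finset.sum_sub_distrib]
    calc ‖∑ i ∈ Finset.range N, (z ^ i * a (nk k) i j - z ^ i * b i j)‖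
        ≤ ∑ i ∈ Finset.range N, ‖z ^ i * a (nk k) i j - z ^ i * b i j‖ :=
          norm_sum_le _ _
      _ ≤ ∑ i ∈ Finset.range N, ε/(4*(N+1)) := by
          apply Finset.sum_le_sum
          intro i hi
          rw [← mul_sub, norm_mul, norm_pow]
          calc ‖z‖ ^ i * ‖a (nk k) i j - b i j‖ ≤ 1 * (ε/(4*(N+1))) := by
                apply mul_le_mul (pow_le_one₀ (norm_nonneg _) hzb.le)
                  (hkev i hi).le (norm_nonneg _) zero_le_one
            _ = ε/(4*(N+1)) := one_mul _
      _ = N * (ε/(4*(N+1))) := by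
          rw [Finset.sum_const, Finset.card_range, nsmul_eq_mul]
      _ ≤ ε/4 := by
          have hpos : (0:ℝ) < 4*((N:ℝ)+1) := by positivity
          have key : (N:ℝ) / (4*((N:ℝ)+1)) ≤ 1/4 := by
            rw [div_le_div_iff₀ hpos (by norm_num)]
            nlinarith
          calc (N:ℝ) * (ε/(4*((N:ℝ)+1))) = ε * ((N:ℝ)/(4*((N:ℝ)+1))) := by ring
            _ ≤ ε * (1/4) := mul_le_mul_of_nonneg_left key hε.le
            _ = ε/4 := by ring
  have hfinal : dist (g j z) (Ψ (nk k) j z) < ε := by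
    rw [dist_eq_norm]
    calc ‖g j z - Ψ (nk k) j z‖
        ≤ ‖g j z - ∑ i ∈ Finset.range N, z ^ i * b i j‖
          + ‖(∑ i ∈ Finset.range N, z ^ i * b i j) - Ψ (nk k) j z‖ := norm_sub_le_norm_sub_add_norm_sub _ _ _
      _ ≤ ‖g j z - ∑ i ∈ Finset.range N, z ^ i * b i j‖
          + (‖(∑ i ∈ Finset.range N, z ^ i * b i j)
              - ∑ i ∈ Finset.range N, z ^ i * a (nk k) i j‖
            + ‖(∑ i ∈ Finset.range N, z ^ i * a (nk k) i j) - Ψ (nk k) j z‖) := by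
          gcongr
          exact norm_sub_le_norm_sub_add_norm_sub _ _ _
      _ ≤ r ^ N / (1 - r) + (ε/4 + r ^ N / (1 - r)) := by
          gcongr
          · rw [norm_sub_rev]
            exact hmid
          · rw [norm_sub_rev]
            exact htail1
      _ < ε/4 + (ε/4 + ε/4) := by
          gcongr
      _ < ε := by linarith
  exact hfinal

theorem stmt_11 (m : ℕ) (C : ℝ)
    (F : ℕ → Fin (m + 1) → ℂ → ℂ)
    (U : ℕ → Set ℂ) (hUopen : ∀ n, IsOpen (U n))
    (hUsub : ∀ n, Metric.closedBall (0:ℂ) 1 ⊆ U n)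
    (hF : ∀ n j, DifferentiableOn ℂ (F n j) (U n))
    (hnc : ∀ n, ∀ z ∈ Metric.closedBall (0:ℂ) 1, ∃ j, F n j z ≠ 0)
    (hT : ∀ n,
      (2 * Real.pi)⁻¹ *
            (∫ θ in (0:ℝ)..(2 * Real.pi),
              (1 / 2) *
                Real.log (∑ j, ‖F n j (Complex.exp (θ * Complex.I))‖ ^ 2)) -
          (1 / 2) * Real.log (∑ j, ‖F n j 0‖ ^ 2) ≤ C) :
    ∃ nk : ℕ → ℕ, StrictMono nk ∧
      ∃ lam : ℕ → ℂ → ℂ, ∃ g : Fin (m + 1) → ℂ → ℂ,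
        (∀ k, DifferentiableOn ℂ (lam k) (Metric.ball (0:ℂ) 1)) ∧
        (∀ k, ∀ z ∈ Metric.ball (0:ℂ) 1, lam k z ≠ 0) ∧
        (∀ j, DifferentiableOn ℂ (g j) (Metric.ball (0:ℂ) 1)) ∧
        (∃ j, ∃ z ∈ Metric.ball (0:ℂ) 1, g j z ≠ 0) ∧
        (∀ j, ∀ K : Set ℂ, K ⊆ Metric.ball (0:ℂ) 1 → IsCompact K →
          TendstoUniformlyOn (fun k z => lam k z * F (nk k) j z) (g j) atTop K) := by
  have hkey : ∀ n, ∃ q : ℂ → ℂ, Differentiable ℂ q ∧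
      (∀ j, ∀ z ∈ Metric.closedBall (0:ℂ) 1, ‖Complex.exp (-q z) * F n j z‖ ≤ 1) ∧
      Real.exp (-2*C - 6) ≤ ∑ j, ‖Complex.exp (-q 0) * F n j 0‖ ^ 2 :=
    fun n => key_bound m C (F n) (U n) (hUopen n) (hUsub n) (hF n) (hnc n) (hT n)
  choose q hqdiff hqbd hqlow using hkey
  set Ψ : ℕ → Fin (m+1) → ℂ → ℂ := fun n j z => Complex.exp (-q n z) * F n j z with hΨ
  have hΨdiff : ∀ n j, DifferentiableOn ℂ (Ψ n j) (Metric.closedBall (0:ℂ) 1) :=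
    fun n j => (((hqdiff n).neg.cexp).differentiableOn).mul ((hF n j).mono (hUsub n))
  have hΨbd : ∀ n j, ∀ z ∈ closedBall (0:ℂ) 1, ‖Ψ n j z‖ ≤ 1 :=
    fun n j z hz => hqbd n j z hz
  obtain ⟨nk, hnk, g, hgconv⟩ := montel_bounded m Ψ hΨdiff hΨbd
  refine ⟨nk, hnk, fun k z => Complex.exp (-q (nk k) z), g, ?_, ?_, ?_, ?_, ?_⟩
  · intro k
    exact ((hqdiff (nk k)).neg.cexp).differentiableOn
  · intro k z _
    exact Complex.exp_ne_zero _
  · intro j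
    have hloc : TendstoLocallyUniformlyOn (fun k z => Ψ (nk k) j z) (g j) atTop
        (Metric.ball (0:ℂ) 1) := by
      rw [tendstoLocallyUniformlyOn_iff_forall_isCompact Metric.isOpen_ball]
      intro K hK hKc
      exact hgconv j K hK hKc
    exact hloc.differentiableOn (Filter.Eventually.of_forall fun k =>
      (hΨdiff (nk k) j).mono Metric.ball_subset_closedBall) Metric.isOpen_ball
  · have h0mem : (0:ℂ) ∈ Metric.ball (0:ℂ) 1 := by simp
    have hconv0 : ∀ j, Tendsto (fun k => Ψ (nk k) j 0) atTop (𝓝 (g j 0)) := by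
      intro j
      exact (hgconv j {0} (by simpa using h0mem) isCompact_singleton).tendsto_at
        (Set.mem_singleton 0)
    by_contra hcon
    push_neg at hcon
    have hg0 : ∀ j, g j 0 = 0 := fun j => hcon j 0 h0mem
    have hsumconv : Tendsto (fun k => ∑ j, ‖Ψ (nk k) j 0‖ ^ 2) atTop
        (𝓝 (∑ j, ‖g j 0‖ ^ 2)) := by
      apply tendsto_finset_sum
      intro j _
      exact ((continuous_norm.tendsto _).comp (hconv0 j)).pow 2
    have hge : Real.exp (-2*C - 6) ≤ ∑ j, ‖g j 0‖ ^ 2 :=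
      ge_of_tendsto hsumconv (Filter.Eventually.of_forall fun k => hqlow (nk k))
    have hzero : ∑ j, ‖g j 0‖ ^ 2 = 0 :=
      Finset.sum_eq_zero fun j _ => by rw [hg0 j]; simp
    rw [hzero] at hge
    exact absurd hge (not_le.mpr (Real.exp_pos _))
  · intro j K hK hKc
    exact hgconv j K hK hKc
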